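/- Let q be real with 0 < q < 1 and let α ≥ 1, n ≥ 0 be integers. For every even positive integer k, Ẽ_{n,q}(α) − q^k · Ẽ_{n,q}(k|α) = [2:q] · Σ_{l=0}^{k−1} (−1)^l q^l [l:q^α]^n. -/

import Mathlib

open scoped BigOperators

/-- `[x:q] = (q^x - 1)/(q - 1)` with real exponentiation. -/
noncomputable def qNum (q x : ℝ) : ℝ := (q ^ x - 1) / (q - 1)

/-- Weighted `q`-Euler polynomial `Ẽ_{n,q}(x|α) = [2:q] ∑_{m≥0} (-1)^m q^m [m+x:q^α]^n`. -/
noncomputable def qEuler (q : ℝ) (α n : ℕ) (x : ℝ) : ℝ :=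
  qNum q 2 * ∑' m : ℕ, (-1 : ℝ) ^ m * q ^ m * (qNum (q ^ α) ((m : ℝ) + x)) ^ n

theorem statement1 (q : ℝ) (hq0 : 0 < q) (hq1 : q < 1)
    (α : ℕ) (hα : 1 ≤ α) (n : ℕ) (k : ℕ) (hk : 0 < k) (hke : Even k) :
    qEuler q α n 0 - q ^ k * qEuler q α n k =
      qNum q 2 * ∑ l ∈ Finset.range k, (-1 : ℝ) ^ l * q ^ l * (qNum (q ^ α) l) ^ n := by
  set Q : ℝ := q ^ α with hQ
  have hQ0 : 0 < Q := pow_pos hq0 α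
  have hQ1 : Q < 1 := pow_lt_one₀ hq0.le hq1 (by omega)
  set f : ℕ → ℝ := fun m => (-1 : ℝ) ^ m * q ^ m * (qNum Q (m : ℝ)) ^ n with hf
  have hbound : ∀ m, |f m| ≤ (1 / (1 - Q)) ^ n * q ^ m := by
    intro m
    have h1 : |qNum Q (m : ℝ)| ≤ 1 / (1 - Q) := by
      rw [qNum, Real.rpow_natCast, abs_div]
      have hQm : Q ^ m ≤ 1 := pow_le_one₀ hQ0.le hQ1.le
      have h2 : |Q ^ m - 1| = 1 - Q ^ m := by
        rw [abs_of_nonpos (by linarith)]; ring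
      have h3 : |Q - 1| = 1 - Q := by
        rw [abs_of_nonpos (by linarith)]; ring
      rw [h2, h3, div_le_div_iff₀ (by linarith) (by linarith)]
      nlinarith [pow_pos hQ0 m]
    have : |f m| = |qNum Q (m : ℝ)| ^ n * q ^ m := by
      rw [hf]
      simp [abs_mul, abs_pow, abs_of_pos hq0]
      ring
    rw [this]
    gcongr
  have hsum : Summable f := by
    apply Summable.of_abs
    apply Summable.of_nonneg_of_le (fun m => abs_nonneg _) hbound
    exact (summable_geometric_of_lt_one hq0.le hq1).mul_left _
  have h0 : qEuler q α n 0 = qNum q 2 * ∑' m, f m := by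
    rw [qEuler]
    congr 1
    apply tsum_congr; intro m
    simp [hf, hQ]
  have hk' : q ^ k * qEuler q α n k = qNum q 2 * ∑' m, f (m + k) := by
    rw [qEuler, ← mul_assoc, mul_comm (q ^ k), mul_assoc, ← tsum_mul_left]
    congr 1
    apply tsum_congr; intro m
    have hc : ((m : ℝ) + (k : ℝ)) = ((m + k : ℕ) : ℝ) := by push_cast; ring
    rw [hc, hf]
    simp only []
    rw [pow_add, pow_add, hke.neg_one_pow]
    ring
  rw [h0, hk', ← mul_sub]
  congr 1
  have key := Summable.sum_add_tsum_nat_add k hsum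
  have hfl : ∑ l ∈ Finset.range k, (-1 : ℝ) ^ l * q ^ l * (qNum Q l) ^ n
      = ∑ l ∈ Finset.range k, f l := rfl
  rw [hfl]
  linarith [key]
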